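/- Let t ≥ 2 be an integer and let a, b, c, d be positive integers with a ≤ b and c ≤ d. If (t^a - 1)(t^b - 1) = (t^c - 1)(t^d - 1), then a = c and b = d. -/

import Mathlib

lemma aux_sum_le (t a b c d : ℕ) (ht : 2 ≤ t) (ha : 0 < a) (hb : 0 < b)
    (hc : 0 < c) (hd : 0 < d)
    (h : (t ^ a - 1) * (t ^ b - 1) = (t ^ c - 1) * (t ^ d - 1)) :
    a + b ≤ c + d := by
  by_contra hlt
  push_neg at hlt
  have hta : t ≤ t ^ a := Nat.le_self_pow ha.ne' t
  have htb : t ≤ t ^ b := Nat.le_self_pow hb.ne' t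
  have htc : t ≤ t ^ c := Nat.le_self_pow hc.ne' t
  have htd : t ≤ t ^ d := Nat.le_self_pow hd.ne' t
  obtain ⟨A, hA⟩ : ∃ A, t ^ a = A + 2 := ⟨t ^ a - 2, by omega⟩
  obtain ⟨B, hB⟩ : ∃ B, t ^ b = B + 2 := ⟨t ^ b - 2, by omega⟩
  obtain ⟨C, hC⟩ : ∃ C, t ^ c = C + 2 := ⟨t ^ c - 2, by omega⟩
  obtain ⟨D, hD⟩ : ∃ D, t ^ d = D + 2 := ⟨t ^ d - 2, by omega⟩
  have hkey : t ^ (c + d) * t ≤ t ^ (a + b) := by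
    calc t ^ (c + d) * t = t ^ (c + d + 1) := by ring
    _ ≤ t ^ (a + b) := Nat.pow_le_pow_right (by omega) (by omega)
  rw [pow_add, pow_add, hA, hB, hC, hD] at hkey
  rw [hA, hB, hC, hD] at h
  have h' : (A + 1) * (B + 1) = (C + 1) * (D + 1) := h
  have hkey2 : (C + 2) * (D + 2) * 2 ≤ (A + 2) * (B + 2) := by
    refine le_trans ?_ hkey
    have : 0 < (C + 2) * (D + 2) := by positivity
    nlinarith
  nlinarith [h', hkey2]

lemma aux_min_eq (t a b c d : ℕ) (ht : 2 ≤ t) (hab : a ≤ b) (hcd : c ≤ d)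
    (hac : a ≤ c) (h : t ^ a + t ^ b = t ^ c + t ^ d) : a = c := by
  by_contra hne
  have hlt : a < c := lt_of_le_of_ne hac hne
  have h3 : 0 < t ^ a := Nat.pow_pos (by omega)
  rcases eq_or_lt_of_le hab with rfl | hab'
  · -- b = a : t^c + t^d too big
    have h1 : t ^ a * t ≤ t ^ c := by
      calc t ^ a * t = t ^ (a + 1) := by ring
      _ ≤ t ^ c := Nat.pow_le_pow_right (by omega) hlt
    have h2 : t ^ c ≤ t ^ d := Nat.pow_le_pow_right (by omega) hcd
    nlinarith
  · -- a < b : divisibility by t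
    obtain ⟨e, he⟩ : ∃ e, b = a + (e + 1) := ⟨b - a - 1, by omega⟩
    obtain ⟨f, hf⟩ : ∃ f, c = a + (f + 1) := ⟨c - a - 1, by omega⟩
    obtain ⟨g, hg⟩ : ∃ g, d = a + (g + 1) := ⟨d - a - 1, by omega⟩
    have h4 : 1 + t ^ (e + 1) = t ^ (f + 1) + t ^ (g + 1) := by
      apply Nat.eq_of_mul_eq_mul_left h3
      rw [mul_add, mul_add, mul_one, ← pow_add, ← pow_add, ← pow_add, ← he, ← hf, ← hg]
      exact h
    have h5 : t ∣ t ^ (e + 1) := dvd_pow_self t (Nat.succ_ne_zero e)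
    have h6 : t ∣ t ^ (f + 1) + t ^ (g + 1) :=
      dvd_add (dvd_pow_self t (Nat.succ_ne_zero f)) (dvd_pow_self t (Nat.succ_ne_zero g))
    rw [← h4] at h6
    have h7 : t ∣ 1 := (Nat.dvd_add_right h5).mp (by rwa [Nat.add_comm] at h6)
    have := Nat.le_of_dvd one_pos h7
    omega

theorem stmt_0 (t a b c d : ℕ) (ht : 2 ≤ t) (ha : 0 < a) (hb : 0 < b)
    (hc : 0 < c) (hd : 0 < d) (hab : a ≤ b) (hcd : c ≤ d)
    (h : (t ^ a - 1) * (t ^ b - 1) = (t ^ c - 1) * (t ^ d - 1)) :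
    a = c ∧ b = d := by
  have hsum : a + b = c + d :=
    le_antisymm (aux_sum_le t a b c d ht ha hb hc hd h)
      (aux_sum_le t c d a b ht hc hd ha hb h.symm)
  have hta : t ≤ t ^ a := Nat.le_self_pow ha.ne' t
  have htb : t ≤ t ^ b := Nat.le_self_pow hb.ne' t
  have htc : t ≤ t ^ c := Nat.le_self_pow hc.ne' t
  have htd : t ≤ t ^ d := Nat.le_self_pow hd.ne' t
  have hprod : t ^ a * t ^ b = t ^ c * t ^ d := by
    rw [← pow_add, ← pow_add, hsum]
  have hpow : t ^ a + t ^ b = t ^ c + t ^ d := by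
    obtain ⟨A, hA⟩ : ∃ A, t ^ a = A + 1 := ⟨t ^ a - 1, by omega⟩
    obtain ⟨B, hB⟩ : ∃ B, t ^ b = B + 1 := ⟨t ^ b - 1, by omega⟩
    obtain ⟨C, hC⟩ : ∃ C, t ^ c = C + 1 := ⟨t ^ c - 1, by omega⟩
    obtain ⟨D, hD⟩ : ∃ D, t ^ d = D + 1 := ⟨t ^ d - 1, by omega⟩
    rw [hA, hB, hC, hD] at h hprod ⊢
    simp only [Nat.add_sub_cancel] at h
    nlinarith [h, hprod]
  have hac : a = c := by
    rcases le_total a c with h' | h'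
    · exact aux_min_eq t a b c d ht hab hcd h' hpow
    · exact (aux_min_eq t c d a b ht hcd hab h' hpow.symm).symm
  exact ⟨hac, by omega⟩
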